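/- Fix k ≥ 1 and real weights y_1,…,y_{2k+1}. Over the formal power series ring ℝ[[t]], let A be the (2k+2)×(2k+2) matrix indexed by 0,…,2k+1 with A_{i+1,i} = 1 and A_{i,i+1} = t·y_{i+1} for 0 ≤ i ≤ 2k and all other entries 0 (the chain graph H_k with ascending steps of weight 1 and descending steps i+1 → i of weight t·y_{i+1}). Let B be the (k+2)×(k+2) matrix indexed by 0,…,k+1 with B_{i+1,i} = 1 for 0 ≤ i ≤ k, B_{i,i+1} = t·y_{2i+1} for 0 ≤ i ≤ k, B_{i+1,i+1} = t·y_{2i+2} for 0 ≤ i ≤ k−1, B_{j+2+a, j} = (−1)^{a+1} for 0 ≤ j ≤ k−1 and 0 ≤ a ≤ k−1−j, and all other entries 0 (the compactified graph H'_k with loops of weight t·y_{2i+2} and extra ascending edges of weight ±1). Then I − A and I − B are invertible over ℝ[[t]] and ((I − A)^{-1})_{0,0} = ((I − B)^{-1})_{0,0}. -/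

import Mathlib

/-- The transfer matrix of the chain graph H_k (vertices 0,…,2k+1), over
ℝ[[t]]: A_{i+1,i} = 1 and A_{i,i+1} = t·y_{i+1} for 0 ≤ i ≤ 2k, all other
entries 0. -/
noncomputable def chainMat (k : ℕ) (y : ℕ → ℝ) :
    Matrix (Fin (2 * k + 2)) (Fin (2 * k + 2)) (PowerSeries ℝ) :=
  Matrix.of fun p q =>
    if (p : ℕ) = (q : ℕ) + 1 then 1
    else if (q : ℕ) = (p : ℕ) + 1 then PowerSeries.C (R := ℝ) (y (q : ℕ)) * PowerSeries.X
    else 0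

/-- The transfer matrix of the compactified chain graph H'_k (vertices
0,…,k+1), over ℝ[[t]]: B_{i+1,i} = 1 (0 ≤ i ≤ k), B_{i,i+1} = t·y_{2i+1}
(0 ≤ i ≤ k), B_{i+1,i+1} = t·y_{2i+2} (0 ≤ i ≤ k−1), the extra ascending
edges B_{j+2+a,j} = (−1)^{a+1} (0 ≤ j ≤ k−1, 0 ≤ a ≤ k−1−j), all other
entries 0. -/
noncomputable def chainMatCompact (k : ℕ) (y : ℕ → ℝ) :
    Matrix (Fin (k + 2)) (Fin (k + 2)) (PowerSeries ℝ) :=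
  Matrix.of fun p q =>
    if (p : ℕ) = (q : ℕ) + 1 then 1
    else if (q : ℕ) = (p : ℕ) + 1 then PowerSeries.C (R := ℝ) (y (2 * (p : ℕ) + 1)) * PowerSeries.X
    else if (p : ℕ) = (q : ℕ) ∧ 1 ≤ (p : ℕ) ∧ (p : ℕ) ≤ k then
      PowerSeries.C (R := ℝ) (y (2 * (p : ℕ))) * PowerSeries.X
    else if (q : ℕ) + 2 ≤ (p : ℕ) then (-1 : PowerSeries ℝ) ^ ((p : ℕ) - (q : ℕ) - 1)
    else 0

open PowerSeries Matrix Finset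

/-- `t·y_i` as a power series. -/
noncomputable def xsq (y : ℕ → ℝ) (i : ℕ) : PowerSeries ℝ := PowerSeries.C (R := ℝ) (y i) * PowerSeries.X

lemma xsq_constantCoeff (y : ℕ → ℝ) (i : ℕ) : PowerSeries.constantCoeff (R := ℝ) (xsq y i) = 0 := by
  simp [xsq]

/-- Upward two-step recurrence. -/
noncomputable def seqU (c : ℕ → PowerSeries ℝ) : ℕ → PowerSeries ℝ
  | 0 => 1
  | 1 => 1
  | (n + 2) => seqU c (n + 1) - c n * seqU c n

lemma seqU_constantCoeff (c : ℕ → PowerSeries ℝ)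
    (hc : ∀ n, PowerSeries.constantCoeff (R := ℝ) (c n) = 0) (n : ℕ) :
    PowerSeries.constantCoeff (R := ℝ) (seqU c n) = 1 := by
  induction n using Nat.strong_induction_on with
  | _ n ih =>
    match n with
    | 0 => simp [seqU]
    | 1 => simp [seqU]
    | (m + 2) => simp [seqU, hc, ih (m + 1) (by omega)]

/-- Trailing determinant sequence `u_p`, via `seqU`. -/
noncomputable def Useq (k : ℕ) (y : ℕ → ℝ) (p : ℕ) : PowerSeries ℝ :=
  seqU (fun j => xsq y (2 * k + 1 - j)) (2 * k + 2 - p)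

lemma Useq_rec (k : ℕ) (y : ℕ → ℝ) (p : ℕ) (hp : p ≤ 2 * k) :
    Useq k y p = Useq k y (p + 1) - xsq y (p + 1) * Useq k y (p + 2) := by
  have h1 : 2 * k + 2 - p = (2 * k - p) + 2 := by omega
  have h2 : 2 * k + 2 - (p + 1) = (2 * k - p) + 1 := by omega
  have h3 : 2 * k + 2 - (p + 2) = 2 * k - p := by omega
  have h4 : 2 * k + 1 - (2 * k - p) = p + 1 := by omega
  simp only [Useq, h1, h2, h3, seqU, h4]

lemma Useq_top1 (k : ℕ) (y : ℕ → ℝ) : Useq k y (2 * k + 1) = 1 := by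
  have h : 2 * k + 2 - (2 * k + 1) = 1 := by omega
  simp only [Useq, h, seqU]

lemma Useq_top2 (k : ℕ) (y : ℕ → ℝ) : Useq k y (2 * k + 2) = 1 := by
  have h : 2 * k + 2 - (2 * k + 2) = 0 := by omega
  simp only [Useq, h, seqU]

lemma Useq_constantCoeff (k : ℕ) (y : ℕ → ℝ) (p : ℕ) :
    PowerSeries.constantCoeff (R := ℝ) (Useq k y p) = 1 :=
  seqU_constantCoeff _ (fun n => xsq_constantCoeff y _) _

/-- Sum over `Fin n` of a function supported at one natural index. -/
lemma sum_ite_eq_nat {n : ℕ} (m : ℕ) (F : ℕ → PowerSeries ℝ) :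
    (∑ q : Fin n, if (q : ℕ) = m then F (q : ℕ) else 0) = if m < n then F m else 0 := by
  rw [Fin.sum_univ_eq_sum_range (fun i => if i = m then F i else 0)]
  split_ifs with h
  · rw [Finset.sum_eq_single_of_mem m (Finset.mem_range.2 h)]
    · simp
    · intro b _ hb; simp [hb]
  · apply Finset.sum_eq_zero
    intro q hq
    have := Finset.mem_range.1 hq
    rw [if_neg (by omega)]

/-- Sum over `Fin n` of a function supported below a natural index. -/
lemma sum_ite_lt_nat {n : ℕ} (m : ℕ) (hm : m ≤ n) (F : ℕ → PowerSeries ℝ) :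
    (∑ q : Fin n, if (q : ℕ) < m then F (q : ℕ) else 0) = ∑ q ∈ Finset.range m, F q := by
  rw [Fin.sum_univ_eq_sum_range (fun i => if i < m then F i else 0)]
  rw [← Finset.sum_subset (Finset.range_subset_range.2 hm)
      (fun q _ hq2 => by rw [if_neg (by simpa using hq2)])]
  exact Finset.sum_congr rfl fun q hq => if_pos (Finset.mem_range.1 hq)

lemma rowA (k : ℕ) (y : ℕ → ℝ) (p : Fin (2 * k + 2)) (F : ℕ → PowerSeries ℝ) :
    (∑ q : Fin (2 * k + 2), chainMat k y p q * F (q : ℕ)) =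
      (if 1 ≤ (p : ℕ) then F ((p : ℕ) - 1) else 0)
        + (if (p : ℕ) + 1 < 2 * k + 2 then xsq y ((p : ℕ) + 1) * F ((p : ℕ) + 1) else 0) := by
  have key : ∀ q : Fin (2 * k + 2), chainMat k y p q * F (q : ℕ) =
      (if (q : ℕ) = (p : ℕ) - 1 then (if 1 ≤ (p : ℕ) then F (q : ℕ) else 0) else 0)
        + (if (q : ℕ) = (p : ℕ) + 1 then xsq y ((p : ℕ) + 1) * F (q : ℕ) else 0) := by
    intro q
    simp only [chainMat, Matrix.of_apply, xsq]
    by_cases h1 : (p : ℕ) = (q : ℕ) + 1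
    · rw [if_pos h1, if_pos (by omega : (q : ℕ) = (p : ℕ) - 1), if_pos (by omega : 1 ≤ (p : ℕ)),
        if_neg (by omega : ¬((q : ℕ) = (p : ℕ) + 1)), one_mul, add_zero]
    · rw [if_neg h1]
      by_cases h2 : (q : ℕ) = (p : ℕ) + 1
      · rw [if_pos h2, if_neg (by omega : ¬((q : ℕ) = (p : ℕ) - 1)), if_pos h2, h2, zero_add]
      · rw [if_neg h2, if_neg h2, zero_mul, add_zero]
        by_cases h3 : (q : ℕ) = (p : ℕ) - 1
        · rw [if_pos h3, if_neg (by omega : ¬(1 ≤ (p : ℕ)))]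
        · rw [if_neg h3]
  rw [Finset.sum_congr rfl fun q _ => key q, Finset.sum_add_distrib]
  congr 1
  · rw [sum_ite_eq_nat ((p : ℕ) - 1) (fun i => if 1 ≤ (p : ℕ) then F i else 0),
      if_pos (by omega : (p : ℕ) - 1 < 2 * k + 2)]
  · rw [sum_ite_eq_nat ((p : ℕ) + 1) (fun i => xsq y ((p : ℕ) + 1) * F i)]

lemma rowB (k : ℕ) (y : ℕ → ℝ) (p : Fin (k + 2)) (F : ℕ → PowerSeries ℝ) :
    (∑ q : Fin (k + 2), chainMatCompact k y p q * F (q : ℕ)) =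
      (∑ q ∈ Finset.range (p : ℕ), (-1 : PowerSeries ℝ) ^ ((p : ℕ) - q - 1) * F q)
        + (if (p : ℕ) + 1 < k + 2 then xsq y (2 * (p : ℕ) + 1) * F ((p : ℕ) + 1) else 0)
        + (if 1 ≤ (p : ℕ) ∧ (p : ℕ) ≤ k then xsq y (2 * (p : ℕ)) * F (p : ℕ) else 0) := by
  have key : ∀ q : Fin (k + 2), chainMatCompact k y p q * F (q : ℕ) =
      (if (q : ℕ) < (p : ℕ) then (-1 : PowerSeries ℝ) ^ ((p : ℕ) - (q : ℕ) - 1) * F (q : ℕ) else 0)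
        + (if (q : ℕ) = (p : ℕ) + 1 then xsq y (2 * (p : ℕ) + 1) * F (q : ℕ) else 0)
        + (if (q : ℕ) = (p : ℕ) then
            (if 1 ≤ (p : ℕ) ∧ (p : ℕ) ≤ k then xsq y (2 * (p : ℕ)) * F (q : ℕ) else 0) else 0) := by
    intro q
    simp only [chainMatCompact, Matrix.of_apply, xsq]
    by_cases h1 : (p : ℕ) = (q : ℕ) + 1
    · have e : (p : ℕ) - (q : ℕ) - 1 = 0 := by omega
      rw [if_pos h1, if_pos (by omega : (q : ℕ) < (p : ℕ)), e, pow_zero, one_mul,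
        if_neg (by omega : ¬((q : ℕ) = (p : ℕ) + 1)), if_neg (by omega : ¬((q : ℕ) = (p : ℕ))),
        add_zero, add_zero]
    · rw [if_neg h1]
      by_cases h2 : (q : ℕ) = (p : ℕ) + 1
      · rw [if_pos h2, if_neg (by omega : ¬((q : ℕ) < (p : ℕ))), if_pos h2,
          if_neg (by omega : ¬((q : ℕ) = (p : ℕ))), zero_add, add_zero]
      · rw [if_neg h2, if_neg h2]
        by_cases h3 : (p : ℕ) = (q : ℕ) ∧ 1 ≤ (p : ℕ) ∧ (p : ℕ) ≤ k
        · rw [if_pos h3, if_neg (by omega : ¬((q : ℕ) < (p : ℕ))),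
            if_pos (by omega : (q : ℕ) = (p : ℕ)), if_pos ⟨h3.2.1, h3.2.2⟩, zero_add, zero_add,
            h3.1]
        · rw [if_neg h3]
          by_cases h4 : (q : ℕ) + 2 ≤ (p : ℕ)
          · rw [if_pos h4, if_pos (by omega : (q : ℕ) < (p : ℕ)),
              if_neg (by omega : ¬((q : ℕ) = (p : ℕ))), add_zero, add_zero]
          · rw [if_neg h4, zero_mul, if_neg (by omega : ¬((q : ℕ) < (p : ℕ)))]
            by_cases h5 : (q : ℕ) = (p : ℕ)
            · rw [if_pos h5, if_neg (by omega : ¬(1 ≤ (p : ℕ) ∧ (p : ℕ) ≤ k)), zero_add, add_zero]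
            · rw [if_neg h5, zero_add, add_zero]
  rw [Finset.sum_congr rfl fun q _ => key q, Finset.sum_add_distrib, Finset.sum_add_distrib]
  congr 1
  · congr 1
    · exact sum_ite_lt_nat (n := k + 2) (p : ℕ) (by omega)
        (fun i => (-1 : PowerSeries ℝ) ^ ((p : ℕ) - i - 1) * F i)
    · exact sum_ite_eq_nat ((p : ℕ) + 1) (fun i => xsq y (2 * (p : ℕ) + 1) * F i)
  · rw [sum_ite_eq_nat (p : ℕ)
      (fun i => if 1 ≤ (p : ℕ) ∧ (p : ℕ) ≤ k then xsq y (2 * (p : ℕ)) * F i else 0),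
      if_pos (by omega : (p : ℕ) < k + 2)]

lemma sum_one_mul_nat {n : ℕ} (p : Fin n) (F : ℕ → PowerSeries ℝ) :
    (∑ q : Fin n, (1 : Matrix (Fin n) (Fin n) (PowerSeries ℝ)) p q * F (q : ℕ)) = F (p : ℕ) := by
  have key : ∀ q : Fin n, (1 : Matrix (Fin n) (Fin n) (PowerSeries ℝ)) p q * F (q : ℕ) =
      if (q : ℕ) = (p : ℕ) then F (q : ℕ) else 0 := by
    intro q
    rw [Matrix.one_apply]
    by_cases h : p = q
    · rw [if_pos h, if_pos (by rw [h]), one_mul]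
    · rw [if_neg h, if_neg (fun hc => h (Fin.ext hc.symm)), zero_mul]
  rw [Finset.sum_congr rfl fun q _ => key q, sum_ite_eq_nat (p : ℕ) F, if_pos p.isLt]

/-- compactification of a vertical chain preserves the path
generating function: ((I − A)⁻¹)_{0,0} = ((I − B)⁻¹)_{0,0} over ℝ[[t]]. -/
theorem chain_compactification (k : ℕ) (hk : 1 ≤ k) (y : ℕ → ℝ) :
    IsUnit (1 - chainMat k y) ∧ IsUnit (1 - chainMatCompact k y) ∧
    (1 - chainMat k y)⁻¹ ⟨0, by omega⟩ ⟨0, by omega⟩ =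
      (1 - chainMatCompact k y)⁻¹ ⟨0, by omega⟩ ⟨0, by omega⟩ := by
  classical
  -- the determinants are units
  have hdetA : IsUnit (1 - chainMat k y).det := by
    rw [PowerSeries.isUnit_iff_constantCoeff, RingHom.map_det, RingHom.mapMatrix_apply]
    have htri : ((1 - chainMat k y).map (PowerSeries.constantCoeff (R := ℝ))).BlockTriangular
        OrderDual.toDual := by
      intro i j hij
      have hij' : (i : ℕ) < (j : ℕ) := hij
      simp only [Matrix.map_apply, Matrix.sub_apply, Matrix.one_apply, chainMat, Matrix.of_apply]
      rw [if_neg (fun hc : i = j => by rw [hc] at hij'; omega),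
        if_neg (by omega : ¬((i : ℕ) = (j : ℕ) + 1))]
      by_cases h2 : (j : ℕ) = (i : ℕ) + 1
      · rw [if_pos h2]; simp
      · rw [if_neg h2]; simp
    rw [Matrix.det_of_lowerTriangular _ htri]
    have hdiag : ∀ i : Fin (2 * k + 2),
        ((1 - chainMat k y).map (PowerSeries.constantCoeff (R := ℝ))) i i = 1 := by
      intro i
      simp only [Matrix.map_apply, Matrix.sub_apply, Matrix.one_apply_eq, chainMat,
        Matrix.of_apply]
      rw [if_neg (by omega : ¬((i : ℕ) = (i : ℕ) + 1)),
        if_neg (by omega : ¬((i : ℕ) = (i : ℕ) + 1))]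
      simp
    rw [Finset.prod_congr rfl fun i _ => hdiag i]
    simp
  have hdetB : IsUnit (1 - chainMatCompact k y).det := by
    rw [PowerSeries.isUnit_iff_constantCoeff, RingHom.map_det, RingHom.mapMatrix_apply]
    have htri : ((1 - chainMatCompact k y).map (PowerSeries.constantCoeff (R := ℝ))).BlockTriangular
        OrderDual.toDual := by
      intro i j hij
      have hij' : (i : ℕ) < (j : ℕ) := hij
      simp only [Matrix.map_apply, Matrix.sub_apply, Matrix.one_apply, chainMatCompact,
        Matrix.of_apply]
      rw [if_neg (fun hc : i = j => by rw [hc] at hij'; omega),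
        if_neg (by omega : ¬((i : ℕ) = (j : ℕ) + 1)),
        if_neg (by omega : ¬((i : ℕ) = (j : ℕ) ∧ 1 ≤ (i : ℕ) ∧ (i : ℕ) ≤ k)),
        if_neg (by omega : ¬((j : ℕ) + 2 ≤ (i : ℕ)))]
      by_cases h2 : (j : ℕ) = (i : ℕ) + 1
      · rw [if_pos h2]; simp
      · rw [if_neg h2]; simp
    rw [Matrix.det_of_lowerTriangular _ htri]
    have hdiag : ∀ i : Fin (k + 2),
        ((1 - chainMatCompact k y).map (PowerSeries.constantCoeff (R := ℝ))) i i = 1 := by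
      intro i
      simp only [Matrix.map_apply, Matrix.sub_apply, Matrix.one_apply_eq, chainMatCompact,
        Matrix.of_apply, eq_self_iff_true, true_and]
      rw [if_neg (by omega : ¬((i : ℕ) = (i : ℕ) + 1)),
        if_neg (by omega : ¬((i : ℕ) = (i : ℕ) + 1))]
      by_cases h3 : 1 ≤ (i : ℕ) ∧ (i : ℕ) ≤ k
      · rw [if_pos h3]; simp
      · rw [if_neg h3, if_neg (by omega : ¬((i : ℕ) + 2 ≤ (i : ℕ)))]; simp
    rw [Finset.prod_congr rfl fun i _ => hdiag i]
    simp
  -- the inverse of u₀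
  have hU0unit : IsUnit (Useq k y 0) := by
    rw [PowerSeries.isUnit_iff_constantCoeff, Useq_constantCoeff]
    exact isUnit_one
  obtain ⟨gu, hgu⟩ := hU0unit
  set g : PowerSeries ℝ := (↑gu⁻¹ : PowerSeries ℝ) with hgdef
  have hg1 : Useq k y 0 * g = 1 := by rw [← hgu, hgdef]; exact_mod_cast gu.mul_inv
  -- solution vector for A
  set V : ℕ → PowerSeries ℝ := fun p => Useq k y (p + 1) * g with hV
  have hAv : (1 - chainMat k y) *ᵥ (fun q : Fin (2 * k + 2) => V (q : ℕ)) =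
      Pi.single (⟨0, by omega⟩ : Fin (2 * k + 2)) 1 := by
    funext p
    show (∑ q : Fin (2 * k + 2), (1 - chainMat k y) p q * V (q : ℕ)) = _
    have expand : ∀ q : Fin (2 * k + 2), (1 - chainMat k y) p q * V (q : ℕ) =
        (1 : Matrix (Fin (2 * k + 2)) (Fin (2 * k + 2)) (PowerSeries ℝ)) p q * V (q : ℕ)
          - chainMat k y p q * V (q : ℕ) := by
      intro q; rw [Matrix.sub_apply, sub_mul]
    rw [Finset.sum_congr rfl fun q _ => expand q, Finset.sum_sub_distrib, sum_one_mul_nat, rowA]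
    rcases (by omega : (p : ℕ) = 0 ∨ (1 ≤ (p : ℕ) ∧ (p : ℕ) ≤ 2 * k) ∨ (p : ℕ) = 2 * k + 1)
      with hp | hp | hp
    · have hps : (Pi.single (⟨0, by omega⟩ : Fin (2 * k + 2)) 1 : Fin (2 * k + 2) → PowerSeries ℝ) p = 1 := by
        rw [show p = (⟨0, by omega⟩ : Fin (2 * k + 2)) from Fin.ext hp]
        exact Pi.single_eq_same _ _
      rw [hps]
      simp only [hp, hV]
      rw [if_neg (by omega : ¬(1 ≤ 0)), if_pos (by omega : 0 + 1 < 2 * k + 2)]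
      have e1 : (0 : ℕ) + 1 = 1 := rfl
      have e2 : (0 : ℕ) + 1 + 1 = 2 := rfl
      rw [e1, e2]
      linear_combination (-g) * Useq_rec k y 0 (by omega) + hg1
    · have hps : (Pi.single (⟨0, by omega⟩ : Fin (2 * k + 2)) 1 : Fin (2 * k + 2) → PowerSeries ℝ) p = 0 := by
        apply Pi.single_eq_of_ne
        intro hc
        have : (p : ℕ) = 0 := by rw [hc]
        omega
      rw [hps]
      rw [if_pos (by omega : 1 ≤ (p : ℕ)), if_pos (by omega : (p : ℕ) + 1 < 2 * k + 2)]
      simp only [hV]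
      have e1 : (p : ℕ) - 1 + 1 = (p : ℕ) := by omega
      have e2 : (p : ℕ) + 1 + 1 = (p : ℕ) + 2 := by omega
      rw [e1, e2]
      linear_combination (-g) * Useq_rec k y (p : ℕ) (by omega)
    · have hps : (Pi.single (⟨0, by omega⟩ : Fin (2 * k + 2)) 1 : Fin (2 * k + 2) → PowerSeries ℝ) p = 0 := by
        apply Pi.single_eq_of_ne
        intro hc
        have : (p : ℕ) = 0 := by rw [hc]
        omega
      rw [hps]
      rw [if_pos (by omega : 1 ≤ (p : ℕ)), if_neg (by omega : ¬((p : ℕ) + 1 < 2 * k + 2))]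
      simp only [hp, hV]
      have e1 : 2 * k + 1 - 1 + 1 = 2 * k + 1 := by omega
      have e2 : 2 * k + 1 + 1 = 2 * k + 2 := by omega
      rw [e1, e2, Useq_top1, Useq_top2]
      ring
  -- solution vector for B
  set W : ℕ → PowerSeries ℝ := fun p =>
    if p = 0 then Useq k y 1 * g
    else (∏ j ∈ Finset.range (p - 1), xsq y (2 * j + 2)) * (Useq k y (2 * p) * g) with hW
  have hT : ∀ p, 1 ≤ p → p ≤ k + 1 →
      (∑ q ∈ Finset.range p, (-1 : PowerSeries ℝ) ^ (p - q - 1) * W q) =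
        (∏ j ∈ Finset.range (p - 1), xsq y (2 * j + 2)) * (Useq k y (2 * p - 1) * g) := by
    intro p hp1
    induction p, hp1 using Nat.le_induction with
    | base =>
      intro _
      rw [Finset.sum_range_one]
      simp only [hW]
      norm_num
    | succ p hp ih =>
      intro hpk
      have ihh := ih (by omega)
      rw [Finset.sum_range_succ]
      have hsgn : ∀ q ∈ Finset.range p,
          (-1 : PowerSeries ℝ) ^ (p + 1 - q - 1) * W q = -((-1 : PowerSeries ℝ) ^ (p - q - 1) * W q) := by
        intro q hq
        have hq' := Finset.mem_range.1 hq
        have e : p + 1 - q - 1 = (p - q - 1) + 1 := by omega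
        rw [e, pow_succ]
        ring
      rw [Finset.sum_congr rfl hsgn, Finset.sum_neg_distrib, ihh]
      have e0 : p + 1 - p - 1 = 0 := by omega
      rw [e0, pow_zero, one_mul]
      have hWp : W p =
          (∏ j ∈ Finset.range (p - 1), xsq y (2 * j + 2)) * (Useq k y (2 * p) * g) := by
        simp only [hW]
        rw [if_neg (by omega : ¬(p = 0))]
      rw [hWp]
      have hrec : Useq k y (2 * p - 1) =
          Useq k y (2 * p) - xsq y (2 * p) * Useq k y (2 * p + 1) := by
        have h := Useq_rec k y (2 * p - 1) (by omega)
        have e1 : 2 * p - 1 + 1 = 2 * p := by omega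
        have e2 : 2 * p - 1 + 2 = 2 * p + 1 := by omega
        rwa [e1, e2] at h
      have hprod : (∏ j ∈ Finset.range (p + 1 - 1), xsq y (2 * j + 2)) =
          (∏ j ∈ Finset.range (p - 1), xsq y (2 * j + 2)) * xsq y (2 * p) := by
        have e3 : p + 1 - 1 = (p - 1) + 1 := by omega
        have e5 : 2 * (p - 1) + 2 = 2 * p := by omega
        rw [e3, Finset.prod_range_succ, e5]
      have e4 : 2 * (p + 1) - 1 = 2 * p + 1 := by omega
      rw [e4, hprod]
      linear_combination (-((∏ j ∈ Finset.range (p - 1), xsq y (2 * j + 2)) * g)) * hrec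
  have hBw : (1 - chainMatCompact k y) *ᵥ (fun q : Fin (k + 2) => W (q : ℕ)) =
      Pi.single (⟨0, by omega⟩ : Fin (k + 2)) 1 := by
    funext p
    show (∑ q : Fin (k + 2), (1 - chainMatCompact k y) p q * W (q : ℕ)) = _
    have expand : ∀ q : Fin (k + 2), (1 - chainMatCompact k y) p q * W (q : ℕ) =
        (1 : Matrix (Fin (k + 2)) (Fin (k + 2)) (PowerSeries ℝ)) p q * W (q : ℕ)
          - chainMatCompact k y p q * W (q : ℕ) := by
      intro q; rw [Matrix.sub_apply, sub_mul]
    rw [Finset.sum_congr rfl fun q _ => expand q, Finset.sum_sub_distrib, sum_one_mul_nat, rowB]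
    rcases (by omega : (p : ℕ) = 0 ∨ (1 ≤ (p : ℕ) ∧ (p : ℕ) ≤ k) ∨ (p : ℕ) = k + 1)
      with hp | hp | hp
    · have hps : (Pi.single (⟨0, by omega⟩ : Fin (k + 2)) 1 : Fin (k + 2) → PowerSeries ℝ) p = 1 := by
        rw [show p = (⟨0, by omega⟩ : Fin (k + 2)) from Fin.ext hp]
        exact Pi.single_eq_same _ _
      rw [hps]
      simp only [hp]
      rw [Finset.range_zero, Finset.sum_empty, if_pos (by omega : 0 + 1 < k + 2),
        if_neg (by omega : ¬(1 ≤ 0 ∧ 0 ≤ k))]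
      have hW0 : W 0 = Useq k y 1 * g := by simp [hW]
      have hW1 : W (0 + 1) = Useq k y 2 * g := by simp [hW]
      have e3 : 2 * (0 : ℕ) + 1 = 1 := by norm_num
      rw [hW0, hW1, e3]
      linear_combination (-g) * Useq_rec k y 0 (by omega) + hg1
    · have hps : (Pi.single (⟨0, by omega⟩ : Fin (k + 2)) 1 : Fin (k + 2) → PowerSeries ℝ) p = 0 := by
        apply Pi.single_eq_of_ne
        intro hc
        have : (p : ℕ) = 0 := by rw [hc]
        omega
      rw [hps]
      rw [hT (p : ℕ) (by omega) (by omega), if_pos (by omega : (p : ℕ) + 1 < k + 2),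
        if_pos (by omega : 1 ≤ (p : ℕ) ∧ (p : ℕ) ≤ k)]
      have hWp : W (p : ℕ) =
          (∏ j ∈ Finset.range ((p : ℕ) - 1), xsq y (2 * j + 2)) * (Useq k y (2 * (p : ℕ)) * g) := by
        simp only [hW]
        rw [if_neg (by omega : ¬((p : ℕ) = 0))]
      have hWp1 : W ((p : ℕ) + 1) =
          ((∏ j ∈ Finset.range ((p : ℕ) - 1), xsq y (2 * j + 2)) * xsq y (2 * (p : ℕ))) *
            (Useq k y (2 * (p : ℕ) + 2) * g) := by
        simp only [hW]
        rw [if_neg (by omega : ¬((p : ℕ) + 1 = 0))]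
        have e3 : (p : ℕ) + 1 - 1 = ((p : ℕ) - 1) + 1 := by omega
        have e4 : 2 * ((p : ℕ) + 1) = 2 * (p : ℕ) + 2 := by omega
        have e5 : 2 * ((p : ℕ) - 1) + 2 = 2 * (p : ℕ) := by omega
        rw [e3, e4, Finset.prod_range_succ, e5]
      rw [hWp, hWp1]
      have hrec1 : Useq k y (2 * (p : ℕ) - 1) =
          Useq k y (2 * (p : ℕ)) - xsq y (2 * (p : ℕ)) * Useq k y (2 * (p : ℕ) + 1) := by
        have h := Useq_rec k y (2 * (p : ℕ) - 1) (by omega)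
        have e1 : 2 * (p : ℕ) - 1 + 1 = 2 * (p : ℕ) := by omega
        have e2 : 2 * (p : ℕ) - 1 + 2 = 2 * (p : ℕ) + 1 := by omega
        rwa [e1, e2] at h
      have hrec2 : Useq k y (2 * (p : ℕ)) =
          Useq k y (2 * (p : ℕ) + 1) - xsq y (2 * (p : ℕ) + 1) * Useq k y (2 * (p : ℕ) + 2) := by
        have h := Useq_rec k y (2 * (p : ℕ)) (by omega)
        have e2 : 2 * (p : ℕ) + 1 + 1 = 2 * (p : ℕ) + 2 := by omega
        rwa [e2] at h
      linear_combination
        (-( (∏ j ∈ Finset.range ((p : ℕ) - 1), xsq y (2 * j + 2)) * g)) * hrec1 +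
        (-( (∏ j ∈ Finset.range ((p : ℕ) - 1), xsq y (2 * j + 2)) * xsq y (2 * (p : ℕ)) * g)) * hrec2
    · have hps : (Pi.single (⟨0, by omega⟩ : Fin (k + 2)) 1 : Fin (k + 2) → PowerSeries ℝ) p = 0 := by
        apply Pi.single_eq_of_ne
        intro hc
        have : (p : ℕ) = 0 := by rw [hc]
        omega
      rw [hps]
      rw [hT (p : ℕ) (by omega) (by omega), if_neg (by omega : ¬((p : ℕ) + 1 < k + 2)),
        if_neg (by omega : ¬(1 ≤ (p : ℕ) ∧ (p : ℕ) ≤ k))]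
      have hWp : W (p : ℕ) =
          (∏ j ∈ Finset.range ((p : ℕ) - 1), xsq y (2 * j + 2)) * (Useq k y (2 * (p : ℕ)) * g) := by
        simp only [hW]
        rw [if_neg (by omega : ¬((p : ℕ) = 0))]
      rw [hWp]
      have e1 : 2 * (p : ℕ) = 2 * k + 2 := by omega
      have e2 : 2 * (p : ℕ) - 1 = 2 * k + 1 := by omega
      rw [e2, e1, Useq_top1, Useq_top2]
      ring
  -- conclude
  have hAinv : (1 - chainMat k y)⁻¹ ⟨0, by omega⟩ ⟨0, by omega⟩ = V 0 := by
    have h := congrArg (fun u => (1 - chainMat k y)⁻¹ *ᵥ u) hAv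
    beta_reduce at h
    rw [Matrix.mulVec_mulVec, Matrix.nonsing_inv_mul _ hdetA, Matrix.one_mulVec,
      Matrix.mulVec_single] at h
    have h0 := congrFun h (⟨0, by omega⟩ : Fin (2 * k + 2))
    simp only at h0
    rw [MulOpposite.op_one, one_smul] at h0
    exact h0.symm
  have hBinv : (1 - chainMatCompact k y)⁻¹ ⟨0, by omega⟩ ⟨0, by omega⟩ = W 0 := by
    have h := congrArg (fun u => (1 - chainMatCompact k y)⁻¹ *ᵥ u) hBw
    beta_reduce at h
    rw [Matrix.mulVec_mulVec, Matrix.nonsing_inv_mul _ hdetB, Matrix.one_mulVec,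
      Matrix.mulVec_single] at h
    have h0 := congrFun h (⟨0, by omega⟩ : Fin (k + 2))
    simp only at h0
    rw [MulOpposite.op_one, one_smul] at h0
    exact h0.symm
  refine ⟨(Matrix.isUnit_iff_isUnit_det _).2 hdetA, (Matrix.isUnit_iff_isUnit_det _).2 hdetB, ?_⟩
  rw [hAinv, hBinv]
  simp [hV, hW]
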